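/- arXiv:1702.03012 — 3 statements merged into one kernel-verified Lean document; each statement's English description precedes it below -/
import Mathlib

section
/- Suppose in addition that the rows of G are linearly independent (rank G = w). Then the k×k matrix [G*; G] obtained by stacking G* on top of G is invertible over 𝔽₂; equivalently, the encoding map m ↦ ([G*; G])ᵀ·m is a bijection of 𝔽₂^k. In particular, distinct choices of the last w coordinates of m (with the first k' coordinates fixed) yield 2^w distinct codewords within the same coset of C, and the message m is uniquely recoverable from x. -/
open Matrix


/-- If moreover the rows of `G` are linearly independent (`rank G = w`),
then the stacked `k×k` matrix `[G*; G]` is invertible over `𝔽₂`; equivalently the encoding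
map `m ↦ [G*; G]ᵀ·m` is a bijection of `𝔽₂^k`.  In particular distinct choices of the last
`w` message coordinates give distinct codewords within the same coset of `C`, and the
message `m` is uniquely recoverable from its encoding `x`. -/
theorem stacked_generator_isUnit {w k' : ℕ} (hw : 0 < w) (hk' : 0 < k')
    (H : Matrix (Fin k') (Fin (k' + w)) (ZMod 2))
    (G : Matrix (Fin w) (Fin (k' + w)) (ZMod 2))
    (Gstar : Matrix (Fin k') (Fin (k' + w)) (ZMod 2))
    (hHG : H * G.transpose = 0)
    (hHGstar : H * Gstar.transpose = 1)
    (hGrows : LinearIndependent (ZMod 2) (fun i : Fin w => G i)) :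
    IsUnit ((Matrix.fromRows Gstar G).submatrix
        (finSumFinEquiv (m := k') (n := w)).symm id) ∧
      Function.Bijective (fun m : Fin k' ⊕ Fin w → ZMod 2 =>
        (Matrix.fromRows Gstar G).transpose.mulVec m) := by
  set M := Matrix.fromRows Gstar G with hM
  -- key: injectivity of c ↦ Mᵀ *ᵥ c
  have key : ∀ c : Fin k' ⊕ Fin w → ZMod 2, Mᵀ *ᵥ c = 0 → c = 0 := by
    intro c hc
    have hce : c = Sum.elim (c ∘ Sum.inl) (c ∘ Sum.inr) := by
      funext i; cases i <;> rfl
    have hMt : Mᵀ = fromCols Gstarᵀ Gᵀ := by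
      rw [hM, transpose_fromRows]
    have hexp : Mᵀ *ᵥ c = Gstarᵀ *ᵥ (c ∘ Sum.inl) + Gᵀ *ᵥ (c ∘ Sum.inr) := by
      conv_lhs => rw [hMt, hce, fromCols_mulVec_sumElim]
    have h1 : H *ᵥ (Mᵀ *ᵥ c) = 0 := by rw [hc, mulVec_zero]
    have h2 : c ∘ Sum.inl = 0 := by
      rw [hexp, mulVec_add, mulVec_mulVec, mulVec_mulVec, hHGstar, hHG,
        one_mulVec, zero_mulVec, add_zero] at h1
      exact h1
    have h3 : Gᵀ *ᵥ (c ∘ Sum.inr) = 0 := by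
      rw [hexp, h2, mulVec_zero, zero_add] at hc
      exact hc
    have h4 : ∑ b, (c ∘ Sum.inr) b • G b = 0 := by
      funext j
      have := congrFun h3 j
      simpa [Matrix.mulVec, dotProduct, mul_comm, Finset.sum_apply] using this
    have h5 : ∀ b, c (Sum.inr b) = 0 :=
      Fintype.linearIndependent_iff.mp hGrows _ h4
    funext i
    cases i with
    | inl a => exact congrFun h2 a
    | inr b => exact h5 b
  have hinj : Function.Injective (fun m : Fin k' ⊕ Fin w → ZMod 2 => Mᵀ *ᵥ m) := by
    have := (injective_iff_map_eq_zero (Mᵀ.mulVecLin)).mpr (fun c hc => key c hc)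
    exact this
  constructor
  · rw [← Matrix.isUnit_transpose, ← Matrix.mulVec_injective_iff_isUnit]
    have heq : (M.submatrix (finSumFinEquiv (m := k') (n := w)).symm id)ᵀ
        = Mᵀ.submatrix id (finSumFinEquiv (m := k') (n := w)).symm := by
      rw [transpose_submatrix]
    rw [heq]
    intro v₁ v₂ hv
    rw [submatrix_mulVec_equiv, submatrix_mulVec_equiv] at hv
    simp only [Equiv.symm_symm, Function.comp_id] at hv
    have := hinj hv
    have hcomp : (v₁ ∘ finSumFinEquiv) ∘ (finSumFinEquiv (m:=k') (n:=w)).symm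
        = (v₂ ∘ finSumFinEquiv) ∘ (finSumFinEquiv (m:=k') (n:=w)).symm := by rw [this]
    simpa [Function.comp_assoc, Equiv.self_comp_symm] using hcomp
  · rw [Fintype.bijective_iff_injective_and_card]
    exact ⟨hinj, by simp⟩
end

section
/- Let X be a random variable uniformly distributed on 𝔽₂^k, and let L : 𝔽₂^k → 𝔽₂^a and T : 𝔽₂^k → 𝔽₂^b be linear maps such that ker L + ker T = 𝔽₂^k. Then the random variables L(X) and T(X) are independent, and each is uniformly distributed on the range of the respective map. (This is the abstract independence principle underlying the individual security of the paper's linear coset code: the eavesdropper's linear observation is independent of the linear functional carrying the protected message bits.) -/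
open MeasureTheory ProbabilityTheory
open scoped ENNReal

instance : MeasurableSpace (ZMod 2) := ⊤
instance : MeasurableSingletonClass (ZMod 2) := ⟨fun _ => trivial⟩

section aux
variable {G H : Type*} [AddCommGroup G] [AddCommGroup H]

private lemma my_card_eq (f : G →+ H) :
    Nat.card G = Nat.card (Set.range f) * Nat.card (f ⁻¹' {0} : Set G) := by
  rw [AddSubgroup.card_eq_card_quotient_mul_card_addSubgroup f.ker,
    Nat.card_congr (QuotientAddGroup.quotientKerEquivRange f).toEquiv]
  rw [Nat.card_congr (Equiv.subtypeEquivRight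
      (fun x => by simp [AddMonoidHom.mem_range, Set.mem_range, eq_comm] :
        ∀ x, x ∈ f.range ↔ x ∈ Set.range f)),
    Nat.card_congr (Equiv.subtypeEquivRight
      (fun x => by simp [AddMonoidHom.mem_ker] : ∀ x, x ∈ f.ker ↔ x ∈ f ⁻¹' {0}))]

private lemma my_card_fiber (f : G →+ H) {u : H} {x₀ : G} (hx₀ : f x₀ = u) :
    Nat.card (f ⁻¹' {u} : Set G) = Nat.card (f ⁻¹' {0} : Set G) := by
  refine Nat.card_congr
    ⟨fun x => ⟨x.1 - x₀, ?_⟩, fun p => ⟨x₀ + p.1, ?_⟩, fun x => ?_, fun p => ?_⟩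
  · have := x.2
    simp only [Set.mem_preimage, Set.mem_singleton_iff] at this ⊢
    simp [map_sub, this, hx₀]
  · have := p.2
    simp only [Set.mem_preimage, Set.mem_singleton_iff] at this ⊢
    simp [map_add, hx₀, this]
  · ext; simp
  · ext; simp

end aux

section lin
variable {R M A B : Type*} [CommRing R] [AddCommGroup M] [Module R M]
  [AddCommGroup A] [Module R A] [AddCommGroup B] [Module R B]

private lemma my_lin_card (f : M →ₗ[R] A) :
    Nat.card M = Nat.card (Set.range f) * Nat.card (f ⁻¹' {0} : Set M) := by
  have := my_card_eq f.toAddMonoidHom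
  simpa using this

private lemma my_lin_fiber (f : M →ₗ[R] A) {u : A} {x₀ : M} (hx₀ : f x₀ = u) :
    Nat.card (f ⁻¹' {u} : Set M) = Nat.card (f ⁻¹' {0} : Set M) := by
  have := my_card_fiber f.toAddMonoidHom (u := u) (x₀ := x₀) (by simpa using hx₀)
  simpa using this

private lemma my_key_card (L : M →ₗ[R] A) (T : M →ₗ[R] B)
    (hker : LinearMap.ker L ⊔ LinearMap.ker T = ⊤) :
    Nat.card (L ⁻¹' {0} : Set M) =
      Nat.card (Set.range T) * Nat.card ((L ⁻¹' {0} ∩ T ⁻¹' {0}) : Set M) := by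
  set g : ↥(LinearMap.ker L) →ₗ[R] B := T.domRestrict (LinearMap.ker L)
  have h0 : Nat.card ↥(LinearMap.ker L) = Nat.card (L ⁻¹' {0} : Set M) :=
    Nat.card_congr (Equiv.subtypeEquivRight (fun x => by simp [LinearMap.mem_ker]))
  have h1 : Set.range g = Set.range T := by
    ext v
    constructor
    · rintro ⟨⟨x, hx⟩, rfl⟩; exact ⟨x, rfl⟩
    · rintro ⟨y, rfl⟩
      have hy : y ∈ LinearMap.ker L ⊔ LinearMap.ker T := hker ▸ Submodule.mem_top
      obtain ⟨p, hp, q, hq, rfl⟩ := Submodule.mem_sup.mp hy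
      exact ⟨⟨p, hp⟩, by simp [g, LinearMap.domRestrict_apply, LinearMap.mem_ker.mp hq]⟩
  have h2 : Nat.card (g ⁻¹' {0} : Set ↥(LinearMap.ker L)) =
      Nat.card ((L ⁻¹' {0} ∩ T ⁻¹' {0}) : Set M) := by
    refine Nat.card_congr ⟨fun x => ⟨x.1.1, ?_, ?_⟩,
      fun y => ⟨⟨y.1, by simpa using y.2.1⟩, by simpa [g] using y.2.2⟩, fun x => ?_, fun y => ?_⟩
    · set_option linter.unnecessarySimpa false in simpa using x.1.2
    · exact x.2
    · ext; simp
    · ext; simp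
  rw [← h0, my_lin_card g, h1, h2]
end lin

private lemma my_count_eq {α : Type*} [MeasurableSpace α] [MeasurableSingletonClass α]
    [Finite α] (s : Set α) : Measure.count s = Nat.card s := by
  rw [Measure.count_apply_finite s s.toFinite]
  congr 1
  rw [Nat.card_coe_set_eq, Set.ncard_eq_toFinset_card s s.toFinite]

private lemma my_unif_apply {k : ℕ} (s : Set (Fin k → ZMod 2)) :
    uniformOn (Set.univ : Set (Fin k → ZMod 2)) s
      = (Nat.card s : ℝ≥0∞) / (Nat.card (Fin k → ZMod 2) : ℝ≥0∞) := by
  rw [uniformOn_univ, my_count_eq]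
  congr 1
  simp [Nat.card_eq_fintype_card]

private lemma my_card_ne_zero {α : Type*} [Finite α] (s : Set α) (hs : s.Nonempty) :
    (Nat.card s : ℝ≥0∞) ≠ 0 := by
  have : Nonempty s := hs.to_subtype
  exact_mod_cast Nat.card_pos.ne'

private lemma my_map_uniform {k c : ℕ}
    (f : (Fin k → ZMod 2) →ₗ[ZMod 2] (Fin c → ZMod 2)) :
    Measure.map (fun x => f x) (uniformOn (Set.univ : Set (Fin k → ZMod 2))) =
      uniformOn (Set.range fun x => f x) := by
  have hm : Measurable fun x : Fin k → ZMod 2 => f x := .of_discrete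
  apply Measure.ext_of_singleton
  intro u
  rw [Measure.map_apply hm (measurableSet_singleton u), my_unif_apply,
    uniformOn, cond_apply .of_discrete, my_count_eq, my_count_eq]
  by_cases hu : u ∈ Set.range fun x => f x
  · obtain ⟨x₀, hx₀⟩ := hu
    rw [Set.inter_eq_self_of_subset_right (by simpa using ⟨x₀, hx₀⟩ :
      ({u} : Set (Fin c → ZMod 2)) ⊆ Set.range fun x => f x)]
    have hfib : Nat.card ((fun x => f x) ⁻¹' {u} : Set (Fin k → ZMod 2))
        = Nat.card ((fun x => f x) ⁻¹' {0} : Set (Fin k → ZMod 2)) :=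
      my_lin_fiber f hx₀
    rw [hfib]
    have hsingle : Nat.card ({u} : Set (Fin c → ZMod 2)) = 1 := by
      simp [Nat.card_coe_set_eq]
    rw [hsingle]
    have hNfact : (Nat.card (Fin k → ZMod 2) : ℝ≥0∞)
        = (Nat.card (Set.range fun x => f x) : ℝ≥0∞)
          * (Nat.card ((fun x => f x) ⁻¹' {0} : Set (Fin k → ZMod 2)) : ℝ≥0∞) := by
      exact_mod_cast congrArg (Nat.cast : ℕ → ℝ≥0∞) (my_lin_card f)
    have hr0 : (Nat.card (Set.range fun x => f x) : ℝ≥0∞) ≠ 0 :=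
      my_card_ne_zero _ ⟨f 0, 0, rfl⟩
    have hn0 : (Nat.card ((fun x => f x) ⁻¹' {0} : Set (Fin k → ZMod 2)) : ℝ≥0∞) ≠ 0 :=
      my_card_ne_zero _ ⟨0, by simp⟩
    rw [hNfact, Nat.cast_one, mul_one, ← one_div]
    exact (ENNReal.div_eq_div_iff hr0 (ENNReal.natCast_ne_top _)
      (mul_ne_zero hr0 hn0)
      (ENNReal.mul_ne_top (ENNReal.natCast_ne_top _) (ENNReal.natCast_ne_top _))).mpr
      (mul_one _).symm
  · rw [Set.preimage_singleton_eq_empty.mpr hu,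
      Set.inter_singleton_eq_empty.mpr hu]
    simp [Nat.card_coe_set_eq]

/-- Let `X` be uniform on `𝔽₂^k` and let `L : 𝔽₂^k → 𝔽₂^a`,
`T : 𝔽₂^k → 𝔽₂^b` be linear maps with `ker L + ker T = 𝔽₂^k`.  Then `L(X)` and `T(X)`
are independent and each is uniformly distributed on the range of the respective map. -/
theorem linear_images_indep_of_ker_sup_eq_top {k a b : ℕ}
    (L : (Fin k → ZMod 2) →ₗ[ZMod 2] (Fin a → ZMod 2))
    (T : (Fin k → ZMod 2) →ₗ[ZMod 2] (Fin b → ZMod 2))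
    (hker : LinearMap.ker L ⊔ LinearMap.ker T = ⊤) :
    IndepFun (fun x => L x) (fun x => T x)
        (uniformOn (Set.univ : Set (Fin k → ZMod 2))) ∧
      Measure.map (fun x => L x) (uniformOn (Set.univ : Set (Fin k → ZMod 2))) =
        uniformOn (Set.range fun x => L x) ∧
      Measure.map (fun x => T x) (uniformOn (Set.univ : Set (Fin k → ZMod 2))) =
        uniformOn (Set.range fun x => T x) := by
  classical
  refine ⟨?_, my_map_uniform L, my_map_uniform T⟩
  have hprob : IsProbabilityMeasure (uniformOn (Set.univ : Set (Fin k → ZMod 2))) :=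
    uniformOn_isProbabilityMeasure Set.finite_univ Set.univ_nonempty
  have hmL : Measurable fun x : Fin k → ZMod 2 => L x := .of_discrete
  have hmT : Measurable fun x : Fin k → ZMod 2 => T x := .of_discrete
  rw [indepFun_iff_map_prod_eq_prod_map_map hmL.aemeasurable hmT.aemeasurable]
  apply Measure.ext_of_singleton
  rintro ⟨u, v⟩
  rw [Measure.map_apply (hmL.prodMk hmT) (measurableSet_singleton _),
    show ({(u, v)} : Set ((Fin a → ZMod 2) × (Fin b → ZMod 2))) = {u} ×ˢ {v} by
      rw [Set.singleton_prod_singleton],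
    Measure.prod_prod,
    Measure.map_apply hmL (measurableSet_singleton _),
    Measure.map_apply hmT (measurableSet_singleton _),
    my_unif_apply, my_unif_apply, my_unif_apply, Set.mk_preimage_prod]
  set N : ℝ≥0∞ := (Nat.card (Fin k → ZMod 2) : ℝ≥0∞) with hN
  have hN0 : N ≠ 0 := by
    simp only [hN, Ne, Nat.cast_eq_zero]
    exact Nat.card_pos.ne'
  have hNtop : N ≠ ⊤ := ENNReal.natCast_ne_top _
  by_cases hu : u ∈ Set.range fun x => L x
  · by_cases hv : v ∈ Set.range fun x => T x
    · -- joint fiber nonempty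
      obtain ⟨x, hx⟩ := hu
      obtain ⟨y, hy⟩ := hv
      have hxy : x - y ∈ LinearMap.ker L ⊔ LinearMap.ker T := hker ▸ Submodule.mem_top
      obtain ⟨p, hp, q, hq, hpq⟩ := Submodule.mem_sup.mp hxy
      have hx' : L x = u := hx
      have hy' : T y = v := hy
      have hx₀ : (L.prod T) (x - p) = (u, v) := by
        have h1 : L (x - p) = u := by
          rw [map_sub, LinearMap.mem_ker.mp hp, sub_zero, hx']
        have hxe : x = p + q + y := sub_eq_iff_eq_add.mp hpq.symm
        have h2 : x - p = y + q := by rw [hxe]; abel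
        have h3 : T (x - p) = v := by
          rw [h2, map_add, LinearMap.mem_ker.mp hq, add_zero, hy']
        simp [LinearMap.prod_apply, h1, h3, Prod.ext_iff]
      have hpre : (((fun x => L x) ⁻¹' {u} ∩ (fun x => T x) ⁻¹' {v}) : Set (Fin k → ZMod 2))
          = (L.prod T) ⁻¹' {(u, v)} := by
        ext z; simp [LinearMap.prod_apply, Prod.ext_iff]
      have hpre0 : ((L.prod T) ⁻¹' {0} : Set (Fin k → ZMod 2))
          = L ⁻¹' {0} ∩ T ⁻¹' {0} := by
        ext z; simp [LinearMap.prod_apply, Prod.ext_iff]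
      rw [hpre, my_lin_fiber (L.prod T) hx₀, hpre0]
      -- numeric identity
      have hkeyN : Nat.card (L ⁻¹' {0} : Set (Fin k → ZMod 2))
            * Nat.card (T ⁻¹' {0} : Set (Fin k → ZMod 2))
          = Nat.card (Fin k → ZMod 2)
            * Nat.card ((L ⁻¹' {0} ∩ T ⁻¹' {0}) : Set (Fin k → ZMod 2)) := by
        rw [my_key_card L T hker, my_lin_card T]
        ring
      have hkey : (Nat.card (L ⁻¹' {0} : Set (Fin k → ZMod 2)) : ℝ≥0∞)
            * (Nat.card (T ⁻¹' {0} : Set (Fin k → ZMod 2)) : ℝ≥0∞)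
          = N * (Nat.card ((L ⁻¹' {0} ∩ T ⁻¹' {0}) : Set (Fin k → ZMod 2)) : ℝ≥0∞) := by
        rw [hN]; exact_mod_cast congrArg (Nat.cast : ℕ → ℝ≥0∞) hkeyN
      have hfibL : Nat.card ((fun x => L x) ⁻¹' {u} : Set (Fin k → ZMod 2))
          = Nat.card ((fun x => L x) ⁻¹' {0} : Set (Fin k → ZMod 2)) := my_lin_fiber L hx
      have hfibT : Nat.card ((fun x => T x) ⁻¹' {v} : Set (Fin k → ZMod 2))
          = Nat.card ((fun x => T x) ⁻¹' {0} : Set (Fin k → ZMod 2)) := my_lin_fiber T hy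
      rw [hfibL, hfibT]
      rw [div_eq_mul_inv, div_eq_mul_inv, div_eq_mul_inv, mul_mul_mul_comm, hkey,
        mul_comm N, mul_assoc, ← mul_assoc N N⁻¹, ENNReal.mul_inv_cancel hN0 hNtop, one_mul]
    · have hpreT : ((fun x => T x) ⁻¹' {v} : Set (Fin k → ZMod 2)) = ∅ :=
        Set.preimage_singleton_eq_empty.mpr hv
      rw [hpreT, Set.inter_empty]
      simp [Nat.card_coe_set_eq]
  · have hpreL : ((fun x => L x) ⁻¹' {u} : Set (Fin k → ZMod 2)) = ∅ :=
      Set.preimage_singleton_eq_empty.mpr hu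
    rw [hpreL, Set.empty_inter]
    simp [Nat.card_coe_set_eq]
end

section
/- (Individual security of the linear coset code.) Assume additionally that the rows of G are linearly independent (rank G = w), and let S be a set of w coordinate indices such that the w×w submatrix G_S of G (columns indexed by S) has rank w. Let M be uniformly distributed on 𝔽₂^{k'}, let K be uniformly distributed on 𝔽₂^{w}, with M and K independent, and set X = ([G*; G])ᵀ·(M, K) ∈ 𝔽₂^k (the encoding of message M with randomizing bits K). Then M and the restriction X|_S are independent random variables; equivalently I(M; X|_S) = 0 and H(M | X|_S) = H(M) = k'·log 2. Thus an eavesdropper observing the w coded coordinates in S learns nothing about the k' = k − w protected message bits. -/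
open MeasureTheory ProbabilityTheory
open scoped ENNReal

/-- Shannon entropy (natural-log base) of a finite-valued random variable. -/
noncomputable def entropy {Ω : Type*} [MeasurableSpace Ω] (μ : Measure Ω)
    {α : Type*} [Fintype α] (X : Ω → α) : ℝ :=
  -∑ a : α, ((μ (X ⁻¹' {a})).toReal * Real.log (μ (X ⁻¹' {a})).toReal)

/-- Conditional entropy `H(X|Y) = H(X,Y) - H(Y)`. -/
noncomputable def condEntropy {Ω : Type*} [MeasurableSpace Ω] (μ : Measure Ω)
    {α β : Type*} [Fintype α] [Fintype β] (X : Ω → α) (Y : Ω → β) : ℝ :=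
  entropy μ (fun ω => (X ω, Y ω)) - entropy μ Y

/-- Mutual information `I(X;Y) = H(X) + H(Y) - H(X,Y)`. -/
noncomputable def mutualInfo {Ω : Type*} [MeasurableSpace Ω] (μ : Measure Ω)
    {α β : Type*} [Fintype α] [Fintype β] (X : Ω → α) (Y : Ω → β) : ℝ :=
  entropy μ X + entropy μ Y - entropy μ (fun ω => (X ω, Y ω))

/-- Conditional mutual information `I(X;Y|Z) = H(X|Z) + H(Y|Z) - H(X,Y|Z)`. -/
noncomputable def condMutualInfo {Ω : Type*} [MeasurableSpace Ω] (μ : Measure Ω)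
    {α β γ : Type*} [Fintype α] [Fintype β] [Fintype γ]
    (X : Ω → α) (Y : Ω → β) (Z : Ω → γ) : ℝ :=
  condEntropy μ X Z + condEntropy μ Y Z - condEntropy μ (fun ω => (X ω, Y ω)) Z

lemma entropy_uniform {Ω α : Type*} [MeasurableSpace Ω] (μ : Measure Ω) [Fintype α]
    (Z : Ω → α) (hcard : 0 < Fintype.card α)
    (h : ∀ a, μ (Z ⁻¹' {a}) = ((Fintype.card α : ℝ≥0∞))⁻¹) :
    entropy μ Z = Real.log (Fintype.card α) := by
  have hc : (Fintype.card α : ℝ) ≠ 0 := by positivity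
  simp only [entropy, h]
  have h1 : ((Fintype.card α : ℝ≥0∞)⁻¹).toReal = (Fintype.card α : ℝ)⁻¹ := by
    simp [ENNReal.toReal_inv]
  rw [h1, Real.log_inv, Finset.sum_const, Finset.card_univ, nsmul_eq_mul]
  field_simp

/-- **Individual security of the linear coset code.**
With `k = k' + w`, `H·Gᵀ = 0`, `H·(G*)ᵀ = I`, the rows of `G` linearly independent, and
`S` a set of `w` coordinates whose submatrix `G_S` has rank `w`: if `M` is uniform on
`𝔽₂^{k'}`, `K` is uniform on `𝔽₂^{w}`, `M` and `K` are independent, and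
`X = [G*; G]ᵀ·(M, K)` is the encoding, then `M` and `X|_S` are independent; equivalently
`I(M; X|_S) = 0` and `H(M | X|_S) = H(M) = k'·log 2`. -/
theorem individual_security_of_linear_coset_code {w k' : ℕ} (hw : 0 < w) (hk' : 0 < k')
    (H : Matrix (Fin k') (Fin (k' + w)) (ZMod 2))
    (G : Matrix (Fin w) (Fin (k' + w)) (ZMod 2))
    (Gstar : Matrix (Fin k') (Fin (k' + w)) (ZMod 2))
    (hHG : H * G.transpose = 0)
    (hHGstar : H * Gstar.transpose = 1)
    (hGrows : LinearIndependent (ZMod 2) (fun i : Fin w => G i))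
    (S : Finset (Fin (k' + w))) (hScard : S.card = w)
    (hGS : (G.submatrix id (fun i : S => (i : Fin (k' + w)))).rank = w)
    {Ω : Type*} [MeasurableSpace Ω] (μ : Measure Ω) [IsProbabilityMeasure μ]
    (M : Ω → Fin k' → ZMod 2) (K : Ω → Fin w → ZMod 2)
    (hM : Measure.map M μ = (PMF.uniformOfFintype (Fin k' → ZMod 2)).toMeasure)
    (hK : Measure.map K μ = (PMF.uniformOfFintype (Fin w → ZMod 2)).toMeasure)
    (hMK : IndepFun M K μ)
    (X : Ω → Fin (k' + w) → ZMod 2)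
    (hX : ∀ ω, X ω = (Matrix.fromRows Gstar G).transpose.mulVec (Sum.elim (M ω) (K ω))) :
    IndepFun M (fun ω => fun i : S => X ω i) μ ∧
      mutualInfo μ M (fun ω => fun i : S => X ω i) = 0 ∧
      condEntropy μ M (fun ω => fun i : S => X ω i) = entropy μ M ∧
      entropy μ M = k' * Real.log 2 := by
  classical
  set Y : Ω → (↥S → ZMod 2) := fun ω => fun i : S => X ω i with hYdef
  -- cardinalities
  have cardM : Fintype.card (Fin k' → ZMod 2) = 2 ^ k' := by simp [ZMod.card]
  have cardK : Fintype.card (Fin w → ZMod 2) = 2 ^ w := by simp [ZMod.card]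
  have cardY : Fintype.card (↥S → ZMod 2) = 2 ^ w := by simp [ZMod.card, hScard]
  -- AEMeasurability of M and K
  have hMae : AEMeasurable M μ := by
    by_contra h
    rw [Measure.map_of_not_aemeasurable h] at hM
    have := congrArg (fun ν : Measure (Fin k' → ZMod 2) => ν Set.univ) hM
    simp at this
  have hKae : AEMeasurable K μ := by
    by_contra h
    rw [Measure.map_of_not_aemeasurable h] at hK
    have := congrArg (fun ν : Measure (Fin w → ZMod 2) => ν Set.univ) hK
    simp at this
  -- singleton probabilities
  have pM : ∀ m, μ (M ⁻¹' {m}) = ((2 : ℝ≥0∞) ^ k')⁻¹ := by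
    intro m
    rw [← Measure.map_apply_of_aemeasurable hMae (measurableSet_singleton m), hM,
      PMF.toMeasure_apply_singleton _ _ (measurableSet_singleton m),
      PMF.uniformOfFintype_apply, cardM]
    push_cast
    rfl
  have pK : ∀ kk, μ (K ⁻¹' {kk}) = ((2 : ℝ≥0∞) ^ w)⁻¹ := by
    intro kk
    rw [← Measure.map_apply_of_aemeasurable hKae (measurableSet_singleton kk), hK,
      PMF.toMeasure_apply_singleton _ _ (measurableSet_singleton kk),
      PMF.uniformOfFintype_apply, cardK]
    push_cast
    rfl
  -- the affine structure of Y
  set B : Matrix (↥S) (Fin w) (ZMod 2) :=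
    (G.submatrix id (fun i : S => (i : Fin (k' + w)))).transpose with hBdef
  set φ : (Fin w → ZMod 2) →ₗ[ZMod 2] (↥S → ZMod 2) := B.mulVecLin with hφdef
  set c : (Fin k' → ZMod 2) → (↥S → ZMod 2) :=
    fun m => fun s => ∑ j, Gstar j (s : Fin (k' + w)) * m j with hcdef
  have hφbij : Function.Bijective φ := by
    have hd1 : Module.finrank (ZMod 2) (Fin w → ZMod 2) = w := by
      simp [Module.finrank_fintype_fun_eq_card]
    have hd2 : Module.finrank (ZMod 2) (↥S → ZMod 2) = w := by
      simp [Module.finrank_fintype_fun_eq_card, hScard]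
    have hBrank : B.rank = w := by rw [hBdef, Matrix.rank_transpose]; exact hGS
    have hsurj : Function.Surjective φ := by
      rw [hφdef, ← LinearMap.range_eq_top]
      apply Submodule.eq_top_of_finrank_eq
      rw [hd2]; exact hBrank
    exact ⟨(LinearMap.injective_iff_surjective_of_finrank_eq_finrank
      (hd1.trans hd2.symm)).2 hsurj, hsurj⟩
  set e : (Fin w → ZMod 2) ≃ (↥S → ZMod 2) := Equiv.ofBijective φ hφbij with hedef
  set κ : (Fin k' → ZMod 2) → (↥S → ZMod 2) → (Fin w → ZMod 2) :=
    fun m y => e.symm (y - c m) with hκdef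
  have hY : ∀ ω, Y ω = c (M ω) + φ (K ω) := by
    intro ω
    funext s
    have hXs : X ω (s : Fin (k' + w)) =
        (∑ j, Gstar j (s : Fin (k' + w)) * M ω j) + ∑ j, G j (s : Fin (k' + w)) * K ω j := by
      rw [hX]
      simp [Matrix.mulVec, dotProduct, Fintype.sum_sum_type, Matrix.fromRows]
      rfl
    have h1 : c (M ω) s = ∑ j, Gstar j (s : Fin (k' + w)) * M ω j := rfl
    have h2 : φ (K ω) s = ∑ j, G j (s : Fin (k' + w)) * K ω j := by
      simp [hφdef, hBdef, Matrix.mulVecLin_apply, Matrix.mulVec, dotProduct]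
    show X ω (s : Fin (k' + w)) = c (M ω) s + φ (K ω) s
    rw [hXs, h1, h2]
  -- key set identity
  have hset : ∀ m y, M ⁻¹' {m} ∩ Y ⁻¹' {y} = M ⁻¹' {m} ∩ K ⁻¹' {κ m y} := by
    intro m y
    ext ω
    simp only [Set.mem_inter_iff, Set.mem_preimage, Set.mem_singleton_iff]
    constructor
    · rintro ⟨hm, hy⟩
      refine ⟨hm, ?_⟩
      rw [hκdef]
      simp only
      rw [eq_comm, Equiv.symm_apply_eq]
      show y - c m = φ (K ω)
      rw [hY ω, hm] at hy
      rw [← hy]; abel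
    · rintro ⟨hm, hk⟩
      refine ⟨hm, ?_⟩
      rw [hY ω, hm, hk]
      have : φ (κ m y) = e (κ m y) := rfl
      rw [this, hκdef]
      simp only [Equiv.apply_symm_apply]
      abel
  -- joint singleton probabilities
  have pJ : ∀ m y, μ (M ⁻¹' {m} ∩ Y ⁻¹' {y}) = ((2:ℝ≥0∞) ^ k')⁻¹ * ((2:ℝ≥0∞) ^ w)⁻¹ := by
    intro m y
    rw [hset m y,
      hMK.measure_inter_preimage_eq_mul _ _ (measurableSet_singleton m)
        (measurableSet_singleton (κ m y)), pM m, pK (κ m y)]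
  -- null measurability of the pieces
  have nmM : ∀ m, NullMeasurableSet (M ⁻¹' {m}) μ := fun m =>
    (hMae.nullMeasurable (measurableSet_singleton m))
  have nmJ : ∀ m y, NullMeasurableSet (M ⁻¹' {m} ∩ Y ⁻¹' {y}) μ := by
    intro m y
    rw [hset m y]
    exact (nmM m).inter (hKae.nullMeasurable (measurableSet_singleton (κ m y)))
  have nmY : ∀ y, NullMeasurableSet (Y ⁻¹' {y}) μ := by
    intro y
    have hdecomp : Y ⁻¹' {y} = ⋃ m, (M ⁻¹' {m} ∩ Y ⁻¹' {y}) := by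
      ext ω; simp
    rw [hdecomp]
    exact NullMeasurableSet.iUnion (fun m => nmJ m y)
  have two_pow_ne_top : ∀ n : ℕ, ((2:ℝ≥0∞) ^ n) ≠ ⊤ := fun n =>
    ENNReal.pow_ne_top (by norm_num)
  have two_pow_ne_zero : ∀ n : ℕ, ((2:ℝ≥0∞) ^ n) ≠ 0 := fun n => by positivity
  -- marginal of Y
  have pY : ∀ y, μ (Y ⁻¹' {y}) = ((2:ℝ≥0∞) ^ w)⁻¹ := by
    intro y
    have hdecomp : Y ⁻¹' {y} = ⋃ m ∈ (Finset.univ : Finset (Fin k' → ZMod 2)),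
        (M ⁻¹' {m} ∩ Y ⁻¹' {y}) := by
      ext ω; simp
    rw [hdecomp, measure_biUnion_finset₀ ?_ (fun m _ => nmJ m y)]
    · simp only [pJ, Finset.sum_const, Finset.card_univ, cardM, nsmul_eq_mul]
      push_cast
      rw [← mul_assoc, ENNReal.mul_inv_cancel (two_pow_ne_zero k') (two_pow_ne_top k'), one_mul]
    · intro a _ b _ hab
      refine Disjoint.aedisjoint (Set.disjoint_left.2 ?_)
      rintro ω ⟨ha, _⟩ ⟨hb, _⟩
      exact hab (ha.symm.trans hb)
  -- marginals for general sets
  have pMset : ∀ s : Set (Fin k' → ZMod 2),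
      μ (M ⁻¹' s) = s.toFinset.card * ((2:ℝ≥0∞) ^ k')⁻¹ := by
    intro s
    have hdecomp : M ⁻¹' s = ⋃ m ∈ s.toFinset, M ⁻¹' {m} := by ext ω; simp
    rw [hdecomp, measure_biUnion_finset₀ ?_ (fun m _ => nmM m)]
    · simp [pM]
    · intro a _ b _ hab
      refine Disjoint.aedisjoint (Set.disjoint_left.2 ?_)
      rintro ω ha hb
      simp only [Set.mem_preimage, Set.mem_singleton_iff] at ha hb
      exact hab (ha.symm.trans hb)
  have pYset : ∀ t : Set (↥S → ZMod 2),
      μ (Y ⁻¹' t) = t.toFinset.card * ((2:ℝ≥0∞) ^ w)⁻¹ := by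
    intro t
    have hdecomp : Y ⁻¹' t = ⋃ y ∈ t.toFinset, Y ⁻¹' {y} := by ext ω; simp
    rw [hdecomp, measure_biUnion_finset₀ ?_ (fun y _ => nmY y)]
    · simp [pY]
    · intro a _ b _ hab
      refine Disjoint.aedisjoint (Set.disjoint_left.2 ?_)
      rintro ω ha hb
      simp only [Set.mem_preimage, Set.mem_singleton_iff] at ha hb
      exact hab (ha.symm.trans hb)
  -- independence
  have hindep : IndepFun M Y μ := by
    rw [indepFun_iff_measure_inter_preimage_eq_mul]
    intro s t _ _
    have hdecomp : M ⁻¹' s ∩ Y ⁻¹' t =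
        ⋃ p ∈ s.toFinset ×ˢ t.toFinset, (M ⁻¹' {p.1} ∩ Y ⁻¹' {p.2}) := by
      ext ω
      simp only [Set.mem_inter_iff, Set.mem_preimage, Set.mem_iUnion, Finset.mem_product,
        Set.mem_singleton_iff, Set.mem_toFinset]
      constructor
      · rintro ⟨hs, ht⟩
        exact ⟨(M ω, Y ω), ⟨hs, ht⟩, rfl, rfl⟩
      · rintro ⟨p, ⟨hs, ht⟩, h1, h2⟩
        exact ⟨h1 ▸ hs, h2 ▸ ht⟩
    rw [hdecomp, measure_biUnion_finset₀ ?_ (fun p _ => nmJ p.1 p.2)]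
    · simp only [pJ, Finset.sum_const, Finset.card_product, nsmul_eq_mul]
      rw [pMset s, pYset t]
      push_cast
      ring
    · intro p hp q hq hpq
      refine Disjoint.aedisjoint (Set.disjoint_left.2 ?_)
      rintro ω ⟨h1, h2⟩ ⟨h3, h4⟩
      simp only [Set.mem_preimage, Set.mem_singleton_iff] at h1 h2 h3 h4
      exact hpq (Prod.ext (h1.symm.trans h3) (h2.symm.trans h4))
  -- entropies
  have hEM : entropy μ M = k' * Real.log 2 := by
    rw [entropy_uniform μ M (by rw [cardM]; positivity)
      (fun a => by rw [pM a, cardM]; push_cast; rfl), cardM]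
    push_cast
    rw [Real.log_pow]
  have hEY : entropy μ Y = w * Real.log 2 := by
    rw [entropy_uniform μ Y (by rw [cardY]; positivity)
      (fun a => by rw [pY a, cardY]; push_cast; rfl), cardY]
    push_cast
    rw [Real.log_pow]
  have hEJ : entropy μ (fun ω => (M ω, Y ω)) = (k' + w) * Real.log 2 := by
    have cardP : Fintype.card ((Fin k' → ZMod 2) × (↥S → ZMod 2)) = 2 ^ (k' + w) := by
      rw [Fintype.card_prod, cardM, cardY, ← pow_add]
    rw [entropy_uniform μ (fun ω => (M ω, Y ω)) (by rw [cardP]; positivity) ?_, cardP]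
    · push_cast
      rw [Real.log_pow]
      push_cast
      ring
    · rintro ⟨m, y⟩
      have : (fun ω => (M ω, Y ω)) ⁻¹' {(m, y)} = M ⁻¹' {m} ∩ Y ⁻¹' {y} := by
        ext ω; simp [Prod.ext_iff]
      rw [this, pJ m y, cardP]
      push_cast
      rw [pow_add, ENNReal.mul_inv (Or.inl (two_pow_ne_zero k')) (Or.inl (two_pow_ne_top k'))]
  refine ⟨hindep, ?_, ?_, hEM⟩
  · rw [mutualInfo, hEM, hEY, hEJ]
    push_cast
    ring
  · rw [condEntropy, hEJ, hEY, hEM]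
    push_cast
    ring
end
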